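/- arXiv:1401.7511 — 2 statements merged into one kernel-verified Lean document; each statement's English description precedes it below -/
import Mathlib

section
/- Let G be a connected simple graph with n ≥ 3 vertices. Then √2 · M₂*(G) ≤ ABC(G) ≤ (n−1)√(2(n−2)) · M₂*(G), with equality on the left if and only if G is isomorphic to the path P₃, and equality on the right if and only if G is isomorphic to the complete graph Kₙ. -/
open Finset SimpleGraph

variable {V : Type*} [Fintype V] [DecidableEq V]

/-- The sum-connectivity index `X(G) = Σ_{uv ∈ E(G)} 1/√(d_u + d_v)`. -/
noncomputable def sumConnIndex (G : SimpleGraph V) [DecidableRel G.Adj] : ℝ :=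
  ∑ e ∈ G.edgeFinset, Sym2.lift
    ⟨fun u v => 1 / Real.sqrt ((G.degree u : ℝ) + (G.degree v : ℝ)),
     fun u v => by dsimp only; rw [add_comm ((G.degree u : ℝ)) ((G.degree v : ℝ))]⟩ e

/-- The Randić index `R(G) = Σ_{uv ∈ E(G)} 1/√(d_u d_v)`. -/
noncomputable def randicIndex (G : SimpleGraph V) [DecidableRel G.Adj] : ℝ :=
  ∑ e ∈ G.edgeFinset, Sym2.lift
    ⟨fun u v => 1 / Real.sqrt ((G.degree u : ℝ) * (G.degree v : ℝ)),
     fun u v => by dsimp only; rw [mul_comm ((G.degree u : ℝ)) ((G.degree v : ℝ))]⟩ e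

/-- The harmonic index `H(G) = Σ_{uv ∈ E(G)} 2/(d_u + d_v)`. -/
noncomputable def harmonicIndex (G : SimpleGraph V) [DecidableRel G.Adj] : ℝ :=
  ∑ e ∈ G.edgeFinset, Sym2.lift
    ⟨fun u v => 2 / ((G.degree u : ℝ) + (G.degree v : ℝ)),
     fun u v => by dsimp only; rw [add_comm ((G.degree u : ℝ)) ((G.degree v : ℝ))]⟩ e

/-- The atom-bond connectivity index `ABC(G) = Σ_{uv ∈ E(G)} √((d_u + d_v − 2)/(d_u d_v))`. -/
noncomputable def abcIndex (G : SimpleGraph V) [DecidableRel G.Adj] : ℝ :=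
  ∑ e ∈ G.edgeFinset, Sym2.lift
    ⟨fun u v => Real.sqrt (((G.degree u : ℝ) + (G.degree v : ℝ) - 2) /
        ((G.degree u : ℝ) * (G.degree v : ℝ))),
     fun u v => by dsimp only; rw [add_comm ((G.degree u : ℝ)) ((G.degree v : ℝ)),
        mul_comm ((G.degree u : ℝ)) ((G.degree v : ℝ))]⟩ e

/-- The first geometric-arithmetic index `GA(G) = Σ_{uv ∈ E(G)} 2√(d_u d_v)/(d_u + d_v)`. -/
noncomputable def geoArithIndex (G : SimpleGraph V) [DecidableRel G.Adj] : ℝ :=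
  ∑ e ∈ G.edgeFinset, Sym2.lift
    ⟨fun u v => 2 * Real.sqrt ((G.degree u : ℝ) * (G.degree v : ℝ)) /
        ((G.degree u : ℝ) + (G.degree v : ℝ)),
     fun u v => by dsimp only; rw [mul_comm ((G.degree u : ℝ)) ((G.degree v : ℝ)),
        add_comm ((G.degree u : ℝ)) ((G.degree v : ℝ))]⟩ e

/-- The augmented Zagreb index `AZI(G) = Σ_{uv ∈ E(G)} (d_u d_v/(d_u + d_v − 2))³`. -/
noncomputable def augZagrebIndex (G : SimpleGraph V) [DecidableRel G.Adj] : ℝ :=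
  ∑ e ∈ G.edgeFinset, Sym2.lift
    ⟨fun u v => ((G.degree u : ℝ) * (G.degree v : ℝ) /
        ((G.degree u : ℝ) + (G.degree v : ℝ) - 2)) ^ 3,
     fun u v => by dsimp only; rw [mul_comm ((G.degree u : ℝ)) ((G.degree v : ℝ)),
        add_comm ((G.degree u : ℝ)) ((G.degree v : ℝ))]⟩ e

/-- The modified second Zagreb index `M₂*(G) = Σ_{uv ∈ E(G)} 1/(d_u d_v)`. -/
noncomputable def modSecondZagrebIndex (G : SimpleGraph V) [DecidableRel G.Adj] : ℝ :=
  ∑ e ∈ G.edgeFinset, Sym2.lift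
    ⟨fun u v => 1 / ((G.degree u : ℝ) * (G.degree v : ℝ)),
     fun u v => by dsimp only; rw [mul_comm ((G.degree u : ℝ)) ((G.degree v : ℝ))]⟩ e


section Aux

set_option linter.unusedSectionVars false

lemma key_left' (A B : ℝ) (hA : 1 ≤ A) (hB : 1 ≤ B) (hAB : 3 ≤ A + B) :
    Real.sqrt 2 * (1 / (A * B)) ≤ Real.sqrt ((A + B - 2) / (A * B)) ∧
    (Real.sqrt 2 * (1 / (A * B)) = Real.sqrt ((A + B - 2) / (A * B)) ↔
      A * B = 2 ∧ A + B = 3) := by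
  have hP : 0 < A * B := by nlinarith
  have h1 : Real.sqrt 2 * (1 / (A * B)) = Real.sqrt (2 / (A * B) ^ 2) := by
    rw [Real.sqrt_div (by norm_num), Real.sqrt_sq hP.le]; ring
  have hnum : 0 ≤ (A + B - 2) / (A * B) := div_nonneg (by linarith) hP.le
  have hnum2 : (0:ℝ) ≤ 2 / (A * B) ^ 2 := by positivity
  have hiff : 2 / (A * B) ^ 2 ≤ (A + B - 2) / (A * B) ↔ 2 ≤ A * B * (A + B - 2) := by
    rw [div_le_div_iff₀ (by positivity) hP]
    constructor <;> intro h <;> nlinarith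
  constructor
  · rw [h1, Real.sqrt_le_sqrt_iff hnum, hiff]
    nlinarith [mul_nonneg (sub_nonneg.2 hA) (sub_nonneg.2 hB)]
  · rw [h1, Real.sqrt_inj hnum2 hnum]
    constructor
    · intro h
      have h2 : A * B * (A + B - 2) = 2 := by
        field_simp at h; nlinarith [h]
      have hs : A + B ≤ 3 := by nlinarith [mul_nonneg (sub_nonneg.2 hA) (sub_nonneg.2 hB)]
      have hs3 : A + B = 3 := le_antisymm hs hAB
      refine ⟨by nlinarith, hs3⟩
    · rintro ⟨h2, h3⟩
      rw [h2, h3]; norm_num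

lemma key_right' (A B N : ℝ) (hA : 1 ≤ A) (hB : 1 ≤ B) (hAB : 3 ≤ A + B)
    (hAN : A ≤ N - 1) (hBN : B ≤ N - 1) (hN : 3 ≤ N) :
    Real.sqrt ((A + B - 2) / (A * B)) ≤ (N - 1) * Real.sqrt (2 * (N - 2)) * (1 / (A * B)) ∧
    (Real.sqrt ((A + B - 2) / (A * B)) = (N - 1) * Real.sqrt (2 * (N - 2)) * (1 / (A * B)) ↔
      A = N - 1 ∧ B = N - 1) := by
  have hP : 0 < A * B := by nlinarith
  have hNn : (0:ℝ) ≤ 2 * (N - 2) := by linarith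
  have h1 : (N - 1) * Real.sqrt (2 * (N - 2)) * (1 / (A * B))
      = Real.sqrt ((N - 1) ^ 2 * (2 * (N - 2)) / (A * B) ^ 2) := by
    rw [Real.sqrt_div (mul_nonneg (sq_nonneg _) hNn), Real.sqrt_sq hP.le,
      Real.sqrt_mul (sq_nonneg _), Real.sqrt_sq (by linarith : (0:ℝ) ≤ N - 1)]
    ring
  have hnum : 0 ≤ (A + B - 2) / (A * B) := div_nonneg (by linarith) hP.le
  have hnum2 : (0:ℝ) ≤ (N - 1) ^ 2 * (2 * (N - 2)) / (A * B) ^ 2 :=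
    div_nonneg (mul_nonneg (sq_nonneg _) hNn) (by positivity)
  have hiff : (A + B - 2) / (A * B) ≤ (N - 1) ^ 2 * (2 * (N - 2)) / (A * B) ^ 2 ↔
      (A + B - 2) * (A * B) ≤ 2 * (N - 2) * (N - 1) ^ 2 := by
    rw [div_le_div_iff₀ hP (by positivity)]
    constructor <;> intro h <;> nlinarith
  have h2ab : A * B ≤ (N - 1) ^ 2 := by nlinarith
  have hkey : (A + B - 2) * (A * B) ≤ 2 * (N - 2) * (N - 1) ^ 2 := by nlinarith
  constructor
  · rw [h1, Real.sqrt_le_sqrt_iff hnum2, hiff]; exact hkey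
  · rw [h1, Real.sqrt_inj hnum hnum2]
    constructor
    · intro h
      have heq : (A + B - 2) * (A * B) = 2 * (N - 2) * (N - 1) ^ 2 := by
        rw [div_eq_div_iff hP.ne' (by positivity : ((A*B)^2:ℝ) ≠ 0)] at h
        nlinarith [h]
      have hAeq : A = N - 1 := by
        by_contra hc
        have hlt : A < N - 1 := lt_of_le_of_ne hAN hc
        have : A * B < (N - 1) ^ 2 := by nlinarith
        nlinarith
      have hBeq : B = N - 1 := by
        by_contra hc
        have hlt : B < N - 1 := lt_of_le_of_ne hBN hc
        have : A * B < (N - 1) ^ 2 := by nlinarith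
        nlinarith
      exact ⟨hAeq, hBeq⟩
    · rintro ⟨h2, h3⟩
      subst h2; subst h3
      have hN1 : (N:ℝ) - 1 ≠ 0 := by linarith
      field_simp
      ring

instance pathGraphAdjDecidable (n : ℕ) : DecidableRel (pathGraph n).Adj :=
  fun _ _ => decidable_of_iff _ pathGraph_adj.symm

lemma aux_walk_closed (G : SimpleGraph V) {S : Set V}
    (hS : ∀ ⦃a⦄, a ∈ S → ∀ ⦃b⦄, G.Adj a b → b ∈ S)
    {x y : V} (p : G.Walk x y) (hx : x ∈ S) : y ∈ S := by
  induction p with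
  | nil => exact hx
  | cons h p ih => exact ih (hS hx h)

lemma aux_exists_adj (G : SimpleGraph V) (hG : G.Connected) (h2 : 2 ≤ Fintype.card V) (v : V) :
    ∃ w, G.Adj v w := by
  obtain ⟨u, hu⟩ := Fintype.exists_ne_of_one_lt_card (by omega) v
  obtain ⟨p⟩ := hG.preconnected v u
  cases p with
  | nil => exact absurd rfl hu.symm
  | cons h _ => exact ⟨_, h⟩

lemma aux_nbr_singleton (G : SimpleGraph V) [DecidableRel G.Adj] {u v : V}
    (h : G.Adj u v) (h1 : G.degree u = 1) : G.neighborFinset u = {v} := by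
  symm
  apply Finset.eq_of_subset_of_card_le
  · simp [Finset.singleton_subset_iff, SimpleGraph.mem_neighborFinset, h]
  · simp [SimpleGraph.card_neighborFinset_eq_degree, h1]

lemma aux_deg_sum_ge_three (G : SimpleGraph V) [DecidableRel G.Adj]
    (hG : G.Connected) (h3 : 3 ≤ Fintype.card V)
    {u v : V} (h : G.Adj u v) : 3 ≤ G.degree u + G.degree v := by
  have hu : 0 < G.degree u := by
    rw [G.degree_pos_iff_exists_adj]; exact ⟨v, h⟩
  have hv : 0 < G.degree v := by
    rw [G.degree_pos_iff_exists_adj]; exact ⟨u, h.symm⟩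
  by_contra hc
  have hu1 : G.degree u = 1 := by omega
  have hv1 : G.degree v = 1 := by omega
  have hNu : G.neighborFinset u = {v} := aux_nbr_singleton G h hu1
  have hNv : G.neighborFinset v = {u} := aux_nbr_singleton G h.symm hv1
  have hclosed : ∀ ⦃a⦄, a ∈ ({u, v} : Set V) → ∀ ⦃b⦄, G.Adj a b → b ∈ ({u, v} : Set V) := by
    rintro a (rfl | rfl) b hab
    · have : b ∈ G.neighborFinset a := by rwa [SimpleGraph.mem_neighborFinset]
      rw [hNu] at this; simp at this; simp [this]
    · have : b ∈ G.neighborFinset a := by rwa [SimpleGraph.mem_neighborFinset]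
      rw [hNv] at this; simp at this; simp [this]
  have hall : ∀ x : V, x ∈ ({u, v} : Set V) := by
    intro x
    obtain ⟨p⟩ := hG.preconnected u x
    exact aux_walk_closed G hclosed p (by simp)
  have hsub : (Finset.univ : Finset V) ⊆ {u, v} := by
    intro x _
    have := hall x
    simp only [Set.mem_insert_iff, Set.mem_singleton_iff] at this
    simp [this]
  have hle := Finset.card_le_card hsub
  simp only [Finset.card_univ] at hle
  have : Fintype.card V ≤ 2 := hle.trans (Finset.card_insert_le _ _ |>.trans (by simp))
  omega

lemma aux_iso_degree (G : SimpleGraph V) [DecidableRel G.Adj]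
    {W : Type*} [Fintype W] [DecidableEq W] {H : SimpleGraph W} [DecidableRel H.Adj]
    (φ : G ≃g H) (v : V) : G.degree v = H.degree (φ v) := by
  rw [← SimpleGraph.card_neighborSet_eq_degree, ← SimpleGraph.card_neighborSet_eq_degree]
  exact Fintype.card_congr (φ.mapNeighborSet v)

lemma aux_pathGraph3_fact : ∀ a b : Fin 3, (pathGraph 3).Adj a b →
    (pathGraph 3).degree a * (pathGraph 3).degree b = 2 ∧
    (pathGraph 3).degree a + (pathGraph 3).degree b = 3 := by decide

lemma aux_P3_to (G : SimpleGraph V) [DecidableRel G.Adj]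
    (φ : G ≃g pathGraph 3) {u v : V} (h : G.Adj u v) :
    G.degree u * G.degree v = 2 ∧ G.degree u + G.degree v = 3 := by
  rw [aux_iso_degree G φ u, aux_iso_degree G φ v]
  exact aux_pathGraph3_fact _ _ (φ.map_adj_iff.mpr h)

lemma aux_P3_of (G : SimpleGraph V) [DecidableRel G.Adj]
    (hG : G.Connected) (h3 : 3 ≤ Fintype.card V)
    (hco : ∀ u v : V, G.Adj u v → G.degree u * G.degree v = 2 ∧ G.degree u + G.degree v = 3) :
    Nonempty (G ≃g pathGraph 3) := by
  have hne : Nonempty V := Fintype.card_pos_iff.mp (by omega)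
  obtain ⟨v₀⟩ := hne
  obtain ⟨x, hx⟩ := aux_exists_adj G hG (by omega) v₀
  have hd1 : 0 < G.degree v₀ := by rw [G.degree_pos_iff_exists_adj]; exact ⟨x, hx⟩
  have hd2 : 0 < G.degree x := by rw [G.degree_pos_iff_exists_adj]; exact ⟨v₀, hx.symm⟩
  obtain ⟨hm, hs⟩ := hco v₀ x hx
  have hcases : (G.degree v₀ = 1 ∧ G.degree x = 2) ∨ (G.degree v₀ = 2 ∧ G.degree x = 1) := by
    omega
  obtain ⟨u, v, huv, hdu, hdv⟩ :
      ∃ u v : V, G.Adj u v ∧ G.degree u = 1 ∧ G.degree v = 2 := by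
    rcases hcases with ⟨h1, h2⟩ | ⟨h1, h2⟩
    · exact ⟨v₀, x, hx, h1, h2⟩
    · exact ⟨x, v₀, hx.symm, h2, h1⟩
  have hNu : G.neighborFinset u = {v} := aux_nbr_singleton G huv hdu
  have huNv : u ∈ G.neighborFinset v := by
    rw [SimpleGraph.mem_neighborFinset]; exact huv.symm
  have hcard : ((G.neighborFinset v).erase u).card = 1 := by
    rw [Finset.card_erase_of_mem huNv, SimpleGraph.card_neighborFinset_eq_degree, hdv]
  obtain ⟨w, hw⟩ := Finset.card_eq_one.mp hcard
  have hwmem : w ∈ (G.neighborFinset v).erase u := hw ▸ Finset.mem_singleton_self w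
  have hwu : w ≠ u := (Finset.mem_erase.mp hwmem).1
  have hvw : G.Adj v w := by
    have := (Finset.mem_erase.mp hwmem).2
    rwa [SimpleGraph.mem_neighborFinset] at this
  have hdw : G.degree w = 1 := by
    obtain ⟨hm', _⟩ := hco v w hvw
    rw [hdv] at hm'; omega
  have hNw : G.neighborFinset w = {v} := aux_nbr_singleton G hvw.symm hdw
  have hNv : G.neighborFinset v = {u, w} := by
    have : insert u ((G.neighborFinset v).erase u) = G.neighborFinset v :=
      Finset.insert_erase huNv
    rw [← this, hw]
  have huv' : u ≠ v := huv.ne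
  have hvw' : v ≠ w := hvw.ne
  have huw : u ≠ w := hwu.symm
  have hclosed : ∀ ⦃a⦄, a ∈ ({u, v, w} : Set V) → ∀ ⦃b⦄, G.Adj a b → b ∈ ({u, v, w} : Set V) := by
    rintro a (rfl | rfl | rfl) b hab <;>
    · have hb : b ∈ G.neighborFinset a := by rwa [SimpleGraph.mem_neighborFinset]
      first
        | (rw [hNu] at hb; simp at hb; simp [hb])
        | (rw [hNv] at hb; simp at hb; rcases hb with rfl | rfl <;> simp)
        | (rw [hNw] at hb; simp at hb; simp [hb])
  have hall : (Finset.univ : Finset V) ⊆ {u, v, w} := by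
    intro y _
    obtain ⟨p⟩ := hG.preconnected u y
    have := aux_walk_closed G hclosed p (by simp)
    simp only [Set.mem_insert_iff, Set.mem_singleton_iff] at this
    simp [this]
  have hcardV : Fintype.card V = 3 := by
    have h1 := Finset.card_le_card hall
    rw [Finset.card_univ] at h1
    have h2 : ({u, v, w} : Finset V).card ≤ 3 :=
      (Finset.card_insert_le _ _).trans
        (by simpa using Nat.add_le_add_right (Finset.card_insert_le v ({w} : Finset V)) 1)
    omega
  have hnuw : ¬ G.Adj u w := by
    intro hadj
    have : w ∈ G.neighborFinset u := by rwa [SimpleGraph.mem_neighborFinset]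
    rw [hNu] at this
    simp at this
    exact hvw' this.symm
  set f : Fin 3 → V := ![u, v, w] with hf
  have hinj : Function.Injective f := by
    intro i j hij
    fin_cases i <;> fin_cases j <;> simp_all [hf] <;>
      first | rfl | (exact absurd hij (by assumption)) | (exact absurd hij.symm (by assumption))
  have hbij : Function.Bijective f :=
    (Fintype.bijective_iff_injective_and_card f).mpr ⟨hinj, by simp [hcardV]⟩
  set e : Fin 3 ≃ V := Equiv.ofBijective f hbij with he
  have iso : pathGraph 3 ≃g G := by
    refine RelIso.mk e ?_
    intro i j
    fin_cases i <;> fin_cases j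
    all_goals first
      | exact iff_of_true huv (by decide)
      | exact iff_of_true hvw (by decide)
      | exact iff_of_true huv.symm (by decide)
      | exact iff_of_true hvw.symm (by decide)
      | exact iff_of_false hnuw (by decide)
      | exact iff_of_false (fun h => hnuw h.symm) (by decide)
      | exact iff_of_false (G.irrefl) (by decide)
  exact ⟨iso.symm⟩

lemma aux_K_of (G : SimpleGraph V) [DecidableRel G.Adj]
    (hG : G.Connected) {n : ℕ} (hn : Fintype.card V = n) (hn3 : 3 ≤ n)
    (h : ∀ u v : V, G.Adj u v → G.degree u = n - 1 ∧ G.degree v = n - 1) :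
    Nonempty (G ≃g completeGraph (Fin n)) := by
  have hdeg : ∀ v : V, G.degree v = n - 1 := by
    intro v
    obtain ⟨w, hw⟩ := aux_exists_adj G hG (by omega) v
    exact (h v w hw).1
  have hadj : ∀ u v : V, u ≠ v → G.Adj u v := by
    intro u v huv
    have hN : G.neighborFinset u = Finset.univ.erase u := by
      apply Finset.eq_of_subset_of_card_le
      · intro x hx
        rw [Finset.mem_erase]
        rw [SimpleGraph.mem_neighborFinset] at hx
        exact ⟨(G.ne_of_adj hx).symm, Finset.mem_univ x⟩
      · rw [Finset.card_erase_of_mem (Finset.mem_univ u), Finset.card_univ, hn,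
          SimpleGraph.card_neighborFinset_eq_degree, hdeg]
    have : v ∈ G.neighborFinset u := by
      rw [hN, Finset.mem_erase]; exact ⟨huv.symm, Finset.mem_univ v⟩
    rwa [SimpleGraph.mem_neighborFinset] at this
  refine ⟨RelIso.mk (Fintype.equivFinOfCardEq hn) ?_⟩
  intro a b
  constructor
  · intro hne
    exact hadj a b (fun hab => hne (by rw [hab]))
  · intro hab
    simp only [completeGraph, ne_eq]
    intro hc
    exact G.ne_of_adj hab ((Fintype.equivFinOfCardEq hn).injective hc)

lemma aux_K_to (G : SimpleGraph V) [DecidableRel G.Adj] {n : ℕ}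
    (hn : Fintype.card V = n) (φ : G ≃g completeGraph (Fin n)) (v : V) :
    G.degree v = n - 1 := by
  have hadj : ∀ u w : V, u ≠ w → G.Adj u w := by
    intro u w huw
    rw [← φ.map_adj_iff]
    exact fun hc => huw (φ.injective hc)
  have hN : G.neighborFinset v = Finset.univ.erase v := by
    ext x
    rw [SimpleGraph.mem_neighborFinset, Finset.mem_erase]
    constructor
    · intro hx; exact ⟨(G.ne_of_adj hx).symm, Finset.mem_univ x⟩
    · rintro ⟨hx, -⟩; exact hadj v x (fun hc => hx (hc.symm))
  rw [← SimpleGraph.card_neighborFinset_eq_degree, hN,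
    Finset.card_erase_of_mem (Finset.mem_univ v), Finset.card_univ, hn]

end Aux

variable (G : SimpleGraph V) [DecidableRel G.Adj]

theorem stmt14 (hG : G.Connected) (n : ℕ) (hn : Fintype.card V = n) (hn3 : 3 ≤ n) :
    Real.sqrt 2 * modSecondZagrebIndex G ≤ abcIndex G ∧
    abcIndex G ≤ ((n : ℝ) - 1) * Real.sqrt (2 * ((n : ℝ) - 2)) * modSecondZagrebIndex G ∧
    (Real.sqrt 2 * modSecondZagrebIndex G = abcIndex G ↔
      Nonempty (G ≃g pathGraph 3)) ∧
    (abcIndex G = ((n : ℝ) - 1) * Real.sqrt (2 * ((n : ℝ) - 2)) * modSecondZagrebIndex G ↔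
      Nonempty (G ≃g completeGraph (Fin n))) := by
  have hcard3 : 3 ≤ Fintype.card V := by omega
  have hN3 : (3:ℝ) ≤ (n:ℝ) := by exact_mod_cast hn3
  -- per-edge degree facts
  have hfacts : ∀ ⦃u v : V⦄, G.Adj u v →
      1 ≤ (G.degree u : ℝ) ∧ 1 ≤ (G.degree v : ℝ) ∧
      3 ≤ (G.degree u : ℝ) + (G.degree v : ℝ) ∧
      (G.degree u : ℝ) ≤ (n:ℝ) - 1 ∧ (G.degree v : ℝ) ≤ (n:ℝ) - 1 := by
    intro u v h
    have hu : 0 < G.degree u := by rw [G.degree_pos_iff_exists_adj]; exact ⟨v, h⟩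
    have hv : 0 < G.degree v := by rw [G.degree_pos_iff_exists_adj]; exact ⟨u, h.symm⟩
    have hsum := aux_deg_sum_ge_three G hG hcard3 h
    have hub : G.degree u < n := hn ▸ G.degree_lt_card_verts u
    have hvb : G.degree v < n := hn ▸ G.degree_lt_card_verts v
    refine ⟨by exact_mod_cast hu, by exact_mod_cast hv, by exact_mod_cast hsum, ?_, ?_⟩
    · have : (G.degree u : ℝ) + 1 ≤ (n:ℝ) := by exact_mod_cast hub
      linarith
    · have : (G.degree v : ℝ) + 1 ≤ (n:ℝ) := by exact_mod_cast hvb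
      linarith
  have hLkey := fun (u v : V) (h : G.Adj u v) =>
    key_left' (G.degree u : ℝ) (G.degree v : ℝ) (hfacts h).1 (hfacts h).2.1 (hfacts h).2.2.1
  have hRkey := fun (u v : V) (h : G.Adj u v) =>
    key_right' (G.degree u : ℝ) (G.degree v : ℝ) (n:ℝ) (hfacts h).1 (hfacts h).2.1
      (hfacts h).2.2.1 (hfacts h).2.2.2.1 (hfacts h).2.2.2.2 hN3
  -- termwise inequalities on edges
  have hLe : ∀ e ∈ G.edgeFinset,
      Real.sqrt 2 * Sym2.lift
        ⟨fun u v => 1 / ((G.degree u : ℝ) * (G.degree v : ℝ)),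
         fun u v => by dsimp only; rw [mul_comm ((G.degree u : ℝ)) ((G.degree v : ℝ))]⟩ e ≤
      Sym2.lift
        ⟨fun u v => Real.sqrt (((G.degree u : ℝ) + (G.degree v : ℝ) - 2) /
            ((G.degree u : ℝ) * (G.degree v : ℝ))),
         fun u v => by dsimp only; rw [add_comm ((G.degree u : ℝ)) ((G.degree v : ℝ)),
            mul_comm ((G.degree u : ℝ)) ((G.degree v : ℝ))]⟩ e := by
    intro e he
    induction e using Sym2.ind with
    | _ u v =>
      rw [SimpleGraph.mem_edgeFinset, SimpleGraph.mem_edgeSet] at he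
      simpa using (hLkey u v he).1
  have hRe : ∀ e ∈ G.edgeFinset,
      Sym2.lift
        ⟨fun u v => Real.sqrt (((G.degree u : ℝ) + (G.degree v : ℝ) - 2) /
            ((G.degree u : ℝ) * (G.degree v : ℝ))),
         fun u v => by dsimp only; rw [add_comm ((G.degree u : ℝ)) ((G.degree v : ℝ)),
            mul_comm ((G.degree u : ℝ)) ((G.degree v : ℝ))]⟩ e ≤
      ((n:ℝ) - 1) * Real.sqrt (2 * ((n:ℝ) - 2)) * Sym2.lift
        ⟨fun u v => 1 / ((G.degree u : ℝ) * (G.degree v : ℝ)),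
         fun u v => by dsimp only; rw [mul_comm ((G.degree u : ℝ)) ((G.degree v : ℝ))]⟩ e := by
    intro e he
    induction e using Sym2.ind with
    | _ u v =>
      rw [SimpleGraph.mem_edgeFinset, SimpleGraph.mem_edgeSet] at he
      simpa using (hRkey u v he).1
  have hML : Real.sqrt 2 * modSecondZagrebIndex G
      = ∑ e ∈ G.edgeFinset, Real.sqrt 2 * Sym2.lift
        ⟨fun u v => 1 / ((G.degree u : ℝ) * (G.degree v : ℝ)),
         fun u v => by dsimp only; rw [mul_comm ((G.degree u : ℝ)) ((G.degree v : ℝ))]⟩ e := by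
    rw [modSecondZagrebIndex, Finset.mul_sum]
  have hMR : ((n:ℝ) - 1) * Real.sqrt (2 * ((n:ℝ) - 2)) * modSecondZagrebIndex G
      = ∑ e ∈ G.edgeFinset, ((n:ℝ) - 1) * Real.sqrt (2 * ((n:ℝ) - 2)) * Sym2.lift
        ⟨fun u v => 1 / ((G.degree u : ℝ) * (G.degree v : ℝ)),
         fun u v => by dsimp only; rw [mul_comm ((G.degree u : ℝ)) ((G.degree v : ℝ))]⟩ e := by
    rw [modSecondZagrebIndex, Finset.mul_sum]
  refine ⟨?_, ?_, ?_, ?_⟩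
  · rw [hML, abcIndex]
    exact Finset.sum_le_sum hLe
  · rw [hMR, abcIndex]
    exact Finset.sum_le_sum hRe
  · rw [hML, abcIndex, Finset.sum_eq_sum_iff_of_le hLe]
    constructor
    · intro heq
      apply aux_P3_of G hG hcard3
      intro u v huv
      have he : s(u, v) ∈ G.edgeFinset := by
        rw [SimpleGraph.mem_edgeFinset, SimpleGraph.mem_edgeSet]; exact huv
      have := heq s(u, v) he
      simp only [Sym2.lift_mk] at this
      have hcond := (hLkey u v huv).2.mp this
      exact ⟨by exact_mod_cast hcond.1, by exact_mod_cast hcond.2⟩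
    · rintro ⟨φ⟩ e he
      induction e using Sym2.ind with
      | _ u v =>
        rw [SimpleGraph.mem_edgeFinset, SimpleGraph.mem_edgeSet] at he
        simp only [Sym2.lift_mk]
        apply (hLkey u v he).2.mpr
        obtain ⟨h1, h2⟩ := aux_P3_to G φ he
        exact ⟨by exact_mod_cast h1, by exact_mod_cast h2⟩
  · rw [hMR, abcIndex, Finset.sum_eq_sum_iff_of_le hRe]
    have hcast : ∀ w : V, ((G.degree w : ℝ) = (n:ℝ) - 1) ↔ G.degree w = n - 1 := by
      intro w
      rw [show ((n:ℝ) - 1) = ((n - 1 : ℕ) : ℝ) by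
        push_cast [Nat.cast_sub (by omega : 1 ≤ n)]; ring]
      exact_mod_cast Iff.rfl
    constructor
    · intro heq
      apply aux_K_of G hG hn hn3
      intro u v huv
      have he : s(u, v) ∈ G.edgeFinset := by
        rw [SimpleGraph.mem_edgeFinset, SimpleGraph.mem_edgeSet]; exact huv
      have := heq s(u, v) he
      simp only [Sym2.lift_mk] at this
      have hcond := (hRkey u v huv).2.mp this
      exact ⟨(hcast u).mp hcond.1, (hcast v).mp hcond.2⟩
    · rintro ⟨φ⟩ e he
      induction e using Sym2.ind with
      | _ u v =>
        rw [SimpleGraph.mem_edgeFinset, SimpleGraph.mem_edgeSet] at he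
        simp only [Sym2.lift_mk]
        apply (hRkey u v he).2.mpr
        exact ⟨(hcast u).mpr (aux_K_to G hn φ u), (hcast v).mpr (aux_K_to G hn φ v)⟩
end

section
/- Let G be a connected simple graph with n ≥ 3 vertices. Then (343√7/216) · R(G) ≤ AZI(G) ≤ ((n−1)⁷/(8(n−2)³)) · R(G), with equality on the left if and only if G is isomorphic to the star K_{1,7}, and equality on the right if and only if G is isomorphic to the complete graph Kₙ. -/
open Finset SimpleGraph

set_option linter.unusedSectionVars false
set_option maxHeartbeats 1000000

section AuxReal

lemma mono7 {a b c : ℝ} (ha : 0 < a) (hab : a ≤ b) (hc : 0 ≤ c) :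
    a ^ 7 * (b + c) ^ 6 ≤ b ^ 7 * (a + c) ^ 6 := by
  have hb : 0 < b := lt_of_lt_of_le ha hab
  have hbc : (0:ℝ) ≤ a * (b + c) := by positivity
  have h1 : a * (b + c) ≤ b * (a + c) := by nlinarith
  have h2 : (a * (b + c)) ^ 6 ≤ (b * (a + c)) ^ 6 := pow_le_pow_left₀ hbc h1 6
  calc a ^ 7 * (b + c) ^ 6 = a * (a * (b + c)) ^ 6 := by ring
    _ ≤ b * (b * (a + c)) ^ 6 :=
        mul_le_mul hab h2 (by positivity) hb.le
    _ = b ^ 7 * (a + c) ^ 6 := by ring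

lemma mono7_strict {a b c : ℝ} (ha : 0 < a) (hab : a < b) (hc : 0 ≤ c) :
    a ^ 7 * (b + c) ^ 6 < b ^ 7 * (a + c) ^ 6 := by
  have hb : 0 < b := lt_trans ha hab
  have hbc : (0:ℝ) ≤ a * (b + c) := by positivity
  have h1 : a * (b + c) ≤ b * (a + c) := by nlinarith
  have h2 : (a * (b + c)) ^ 6 ≤ (b * (a + c)) ^ 6 := pow_le_pow_left₀ hbc h1 6
  have h3 : (0:ℝ) < (b * (a + c)) ^ 6 := by positivity
  calc a ^ 7 * (b + c) ^ 6 = a * (a * (b + c)) ^ 6 := by ring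
    _ ≤ a * (b * (a + c)) ^ 6 := by nlinarith
    _ < b * (b * (a + c)) ^ 6 := by nlinarith
    _ = b ^ 7 * (a + c) ^ 6 := by ring

lemma poly_lower {s : ℝ} (hs : 1 ≤ s) : 823543 * s ^ 6 ≤ 46656 * (s + 1) ^ 7 := by
  nlinarith [mul_nonneg (sq_nonneg (s-6)) (by positivity : (0:ℝ) ≤ 46656*s^5+62921*s^4+55212*s^3+30348*s^2+9504*s+1296)]

lemma poly_lower_eq {s : ℝ} (hs : 1 ≤ s)
    (h : 823543 * s ^ 6 = 46656 * (s + 1) ^ 7) : s = 6 := by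
  have hq : (0:ℝ) < 46656*s^5+62921*s^4+55212*s^3+30348*s^2+9504*s+1296 := by positivity
  have key : (s - 6) ^ 2 * (46656*s^5+62921*s^4+55212*s^3+30348*s^2+9504*s+1296) = 0 := by
    nlinarith [h]
  rcases mul_eq_zero.1 key with h1 | h1
  · have := pow_eq_zero_iff (n := 2) (by norm_num) |>.1 h1
    linarith
  · linarith

lemma lower_nat {x y : ℕ} (hx : 1 ≤ x) (hy : 1 ≤ y) (hxy : 3 ≤ x + y) :
    823543 * ((x:ℝ) + y - 2) ^ 6 ≤ 46656 * ((x:ℝ) * y) ^ 7 := by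
  have hx' : (1:ℝ) ≤ x := by exact_mod_cast hx
  have hy' : (1:ℝ) ≤ y := by exact_mod_cast hy
  have hs : (1:ℝ) ≤ (x:ℝ) + y - 2 := by
    have : (3:ℝ) ≤ (x:ℝ) + y := by exact_mod_cast hxy
    linarith
  have hp : ((x:ℝ) + y - 2) + 1 ≤ (x:ℝ) * y := by nlinarith
  calc 823543 * ((x:ℝ) + y - 2) ^ 6 ≤ 46656 * (((x:ℝ) + y - 2) + 1) ^ 7 := poly_lower hs
    _ ≤ 46656 * ((x:ℝ) * y) ^ 7 := by
        have := pow_le_pow_left₀ (by linarith : (0:ℝ) ≤ ((x:ℝ) + y - 2) + 1) hp 7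
        linarith

lemma lower_nat_eq {x y : ℕ} (hx : 1 ≤ x) (hy : 1 ≤ y) (hxy : 3 ≤ x + y)
    (h : 823543 * ((x:ℝ) + y - 2) ^ 6 = 46656 * ((x:ℝ) * y) ^ 7) :
    (x = 1 ∧ y = 7) ∨ (x = 7 ∧ y = 1) := by
  have hx' : (1:ℝ) ≤ x := by exact_mod_cast hx
  have hy' : (1:ℝ) ≤ y := by exact_mod_cast hy
  have hs : (1:ℝ) ≤ (x:ℝ) + y - 2 := by
    have : (3:ℝ) ≤ (x:ℝ) + y := by exact_mod_cast hxy
    linarith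
  have hp : ((x:ℝ) + y - 2) + 1 ≤ (x:ℝ) * y := by nlinarith
  have h1 := poly_lower hs
  have h2 := pow_le_pow_left₀ (by linarith : (0:ℝ) ≤ ((x:ℝ) + y - 2) + 1) hp 7
  have e2 : (((x:ℝ) + y - 2) + 1) ^ 7 = ((x:ℝ) * y) ^ 7 := by linarith
  have e2' : ((x:ℝ) + y - 2) + 1 = (x:ℝ) * y := by
    have hxy0 : (0:ℝ) ≤ (x:ℝ) * y := by positivity
    have h7' : ((x:ℝ) * y) ^ 7 ≤ (((x:ℝ) + y - 2) + 1) ^ 7 := le_of_eq e2.symm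
    exact le_antisymm hp ((pow_le_pow_iff_left₀ hxy0 (by linarith) (by norm_num)).1 h7')
  have e1 : 823543 * ((x:ℝ) + y - 2) ^ 6 = 46656 * (((x:ℝ) + y - 2) + 1) ^ 7 := by
    rw [e2']; linarith
  have hs6 : (x:ℝ) + y - 2 = 6 := poly_lower_eq hs e1
  have hsum : x + y = 8 := by
    have : (x:ℝ) + y = 8 := by linarith
    exact_mod_cast this
  have hprod : x * y = 7 := by
    have : (x:ℝ) * y = 7 := by rw [← e2', hs6]; norm_num
    exact_mod_cast this
  have hx8 : x ≤ 8 := by omega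
  interval_cases x <;> omega

lemma upper_aux {x y m : ℝ} (hx : 1 ≤ x) (hxm : x ≤ m) (hy : 2 ≤ y) (hym : y ≤ m) :
    (x*y)^7 * (2*m-2)^6 ≤ m^14 * (x+y-2)^6 := by
  have hm : 2 ≤ m := le_trans hy hym
  have h1 : x^7*(m+(y-2))^6 ≤ m^7*(x+(y-2))^6 := mono7 (by linarith) hxm (by linarith)
  have h2 := mono7 (show (0:ℝ) < y by linarith) hym (show (0:ℝ) ≤ m-2 by linarith)
  have e1 : y^7*(m+(m-2))^6 = y^7*(2*m-2)^6 := by ring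
  have e2 : m^7*(y+(m-2))^6 = m^7*(m+(y-2))^6 := by ring
  rw [e1, e2] at h2
  have hpos : (0:ℝ) < (m+(y-2))^6 := pow_pos (by linarith) 6
  have key : (x*y)^7 * (2*m-2)^6 * (m+(y-2))^6 ≤ m^14 * (x+y-2)^6 * (m+(y-2))^6 := by
    calc (x*y)^7 * (2*m-2)^6 * (m+(y-2))^6
        = (x^7*(m+(y-2))^6) * (y^7*(2*m-2)^6) := by ring
      _ ≤ (m^7*(x+(y-2))^6) * (m^7*(m+(y-2))^6) := by
          apply mul_le_mul h1 h2 ?_ ?_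
          · have : (0:ℝ) ≤ 2*m-2 := by linarith
            positivity
          · have : (0:ℝ) ≤ x+(y-2) := by linarith
            positivity
      _ = m^14 * (x+y-2)^6 * (m+(y-2))^6 := by ring
  exact le_of_mul_le_mul_right key hpos

lemma upper_aux_strict {x y m : ℝ} (hx : 1 ≤ x) (hxm : x ≤ m) (hy : 2 ≤ y) (hym : y ≤ m)
    (hne : x < m ∨ y < m) :
    (x*y)^7 * (2*m-2)^6 < m^14 * (x+y-2)^6 := by
  have hm : 2 ≤ m := le_trans hy hym
  have h2 := mono7 (show (0:ℝ) < y by linarith) hym (show (0:ℝ) ≤ m-2 by linarith)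
  have e1 : y^7*(m+(m-2))^6 = y^7*(2*m-2)^6 := by ring
  have e2 : m^7*(y+(m-2))^6 = m^7*(m+(y-2))^6 := by ring
  rw [e1, e2] at h2
  have hpos : (0:ℝ) < (m+(y-2))^6 := pow_pos (by linarith) 6
  have hA : (0:ℝ) < y^7*(2*m-2)^6 := by
    have h1 : (0:ℝ) < 2*m-2 := by linarith
    positivity
  have hB : (0:ℝ) < m^7*(m+(y-2))^6 := by
    have h1 : (0:ℝ) < m+(y-2) := by linarith
    positivity
  have key : (x*y)^7 * (2*m-2)^6 * (m+(y-2))^6 < m^14 * (x+y-2)^6 * (m+(y-2))^6 := by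
    rcases hne with hlt | hlt
    · have h1 : x^7*(m+(y-2))^6 < m^7*(x+(y-2))^6 := mono7_strict (by linarith) hlt (by linarith)
      calc (x*y)^7 * (2*m-2)^6 * (m+(y-2))^6
          = (x^7*(m+(y-2))^6) * (y^7*(2*m-2)^6) := by ring
        _ < (m^7*(x+(y-2))^6) * (y^7*(2*m-2)^6) := mul_lt_mul_of_pos_right h1 hA
        _ ≤ (m^7*(x+(y-2))^6) * (m^7*(m+(y-2))^6) := by
            apply mul_le_mul_of_nonneg_left h2
            have : (0:ℝ) ≤ x+(y-2) := by linarith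
            positivity
        _ = m^14 * (x+y-2)^6 * (m+(y-2))^6 := by ring
    · have h2s := mono7_strict (show (0:ℝ) < y by linarith) hlt (show (0:ℝ) ≤ m-2 by linarith)
      rw [e1, e2] at h2s
      have h1 : x^7*(m+(y-2))^6 ≤ m^7*(x+(y-2))^6 := mono7 (by linarith) hxm (by linarith)
      have hC : (0:ℝ) < x^7*(m+(y-2))^6 := by
        have h3 : (0:ℝ) < m+(y-2) := by linarith
        have h4 : (0:ℝ) < x := by linarith
        positivity
      calc (x*y)^7 * (2*m-2)^6 * (m+(y-2))^6
          = (x^7*(m+(y-2))^6) * (y^7*(2*m-2)^6) := by ring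
        _ < (x^7*(m+(y-2))^6) * (m^7*(m+(y-2))^6) := mul_lt_mul_of_pos_left h2s hC
        _ ≤ (m^7*(x+(y-2))^6) * (m^7*(m+(y-2))^6) := mul_le_mul_of_nonneg_right h1 hB.le
        _ = m^14 * (x+y-2)^6 * (m+(y-2))^6 := by ring
  exact lt_of_mul_lt_mul_right key hpos.le

lemma upper_deg1 {x m : ℝ} (hx : 2 ≤ x) (hxm : x ≤ m) :
    x^7 * (2*m-2)^6 < m^14 * (x-1)^6 := by
  have hm : 2 ≤ m := le_trans hx hxm
  have h1 : (x*2)^7 * (2*m-2)^6 ≤ m^14 * (x+2-2)^6 :=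
    upper_aux (by linarith) hxm le_rfl hm
  have e : m^14 * (x+2-2)^6 = m^14 * x^6 := by ring
  rw [e] at h1
  have h2 : x^6 < 128 * (x-1)^6 := by
    have h3 : x ≤ 2*(x-1) := by linarith
    have h4 : x^6 ≤ (2*(x-1))^6 := pow_le_pow_left₀ (by linarith) h3 6
    have h5 : (2*(x-1))^6 = 64*(x-1)^6 := by ring
    have h6 : (0:ℝ) < (x-1)^6 := pow_pos (by linarith) 6
    linarith
  have h8 : 128 * (x^7 * (2*m-2)^6) ≤ m^14 * x^6 := by
    calc 128 * (x^7 * (2*m-2)^6) = (x*2)^7 * (2*m-2)^6 := by ring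
      _ ≤ m^14 * x^6 := h1
  have h9 : m^14 * x^6 < m^14 * (128*(x-1)^6) := by
    have hm14 : (0:ℝ) < m^14 := by positivity
    exact mul_lt_mul_of_pos_left h2 hm14
  linarith

lemma upper_nat {x y m : ℕ} (hx : 1 ≤ x) (hxm : x ≤ m) (hy : 1 ≤ y) (hym : y ≤ m)
    (hxy : 3 ≤ x + y) :
    ((x:ℝ)*y)^7 * (2*(m:ℝ)-2)^6 ≤ (m:ℝ)^14 * ((x:ℝ)+y-2)^6 ∧
    (((x:ℝ)*y)^7 * (2*(m:ℝ)-2)^6 = (m:ℝ)^14 * ((x:ℝ)+y-2)^6 ↔ x = m ∧ y = m) := by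
  have hm2 : 2 ≤ m := by omega
  have hx' : (1:ℝ) ≤ x := by exact_mod_cast hx
  have hy' : (1:ℝ) ≤ y := by exact_mod_cast hy
  have hxm' : (x:ℝ) ≤ m := by exact_mod_cast hxm
  have hym' : (y:ℝ) ≤ m := by exact_mod_cast hym
  by_cases hcase : x = m ∧ y = m
  · obtain ⟨rfl, rfl⟩ := hcase
    constructor
    · apply le_of_eq; ring
    · simp only [and_self, iff_true]; ring
  · have hstrict : ((x:ℝ)*y)^7 * (2*(m:ℝ)-2)^6 < (m:ℝ)^14 * ((x:ℝ)+y-2)^6 := by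
      rcases Nat.lt_or_ge y 2 with hy1 | hy2
      · have hy1 : y = 1 := by omega
        have hx2 : 2 ≤ x := by omega
        have hx2' : (2:ℝ) ≤ x := by exact_mod_cast hx2
        have := upper_deg1 hx2' hxm'
        have hyy : (y:ℝ) = 1 := by exact_mod_cast hy1
        rw [hyy]
        calc ((x:ℝ)*1)^7 * (2*(m:ℝ)-2)^6 = (x:ℝ)^7 * (2*(m:ℝ)-2)^6 := by ring
          _ < (m:ℝ)^14 * ((x:ℝ)-1)^6 := this
          _ = (m:ℝ)^14 * ((x:ℝ)+1-2)^6 := by ring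
      · rcases Nat.lt_or_ge x 2 with hx1 | hx2
        · have hx1 : x = 1 := by omega
          have hy2' : (2:ℝ) ≤ y := by exact_mod_cast hy2
          have := upper_deg1 hy2' hym'
          have hxx : (x:ℝ) = 1 := by exact_mod_cast hx1
          rw [hxx]
          calc ((1:ℝ)*y)^7 * (2*(m:ℝ)-2)^6 = (y:ℝ)^7 * (2*(m:ℝ)-2)^6 := by ring
            _ < (m:ℝ)^14 * ((y:ℝ)-1)^6 := this
            _ = (m:ℝ)^14 * ((1:ℝ)+y-2)^6 := by ring
        · have hy2' : (2:ℝ) ≤ y := by exact_mod_cast hy2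
          have hne : (x:ℝ) < m ∨ (y:ℝ) < m := by
            have : x < m ∨ y < m := by omega
            rcases this with h | h
            · left; exact_mod_cast h
            · right; exact_mod_cast h
          exact upper_aux_strict hx' hxm' hy2' hym' hne
    refine ⟨hstrict.le, ?_, ?_⟩
    · intro h; exact absurd h hstrict.ne
    · rintro ⟨rfl, rfl⟩; ring

lemma bridge_le {P S C : ℝ} (hP : 0 < P) (hS : 0 < S) (hC : 0 ≤ C) :
    (C / Real.sqrt P ≤ (P/S)^3 ↔ C^2 * S^6 ≤ P^7) := by
  have hsP : 0 < Real.sqrt P := Real.sqrt_pos.2 hP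
  rw [div_pow, div_le_div_iff₀ hsP (by positivity)]
  have h1 : (C * S^3)^2 = C^2 * S^6 := by ring
  have h2 : (P^3 * Real.sqrt P)^2 = P^7 := by
    nlinarith [Real.sq_sqrt hP.le]
  rw [← h1, ← h2]
  exact (pow_le_pow_iff_left₀ (mul_nonneg hC (by positivity)) (by positivity) two_ne_zero).symm

lemma bridge_eq {P S C : ℝ} (hP : 0 < P) (hS : 0 < S) (hC : 0 ≤ C) :
    (C / Real.sqrt P = (P/S)^3 ↔ C^2 * S^6 = P^7) := by
  constructor
  · intro h
    exact le_antisymm ((bridge_le hP hS hC).1 h.le)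
      (by
        have h2 : (P/S)^3 ≤ C / Real.sqrt P := h.ge
        have hsP : 0 < Real.sqrt P := Real.sqrt_pos.2 hP
        rw [div_pow, div_le_div_iff₀ (by positivity) hsP] at h2
        have e1 : (C * S^3)^2 = C^2 * S^6 := by ring
        have e2 : (P^3 * Real.sqrt P)^2 = P^7 := by nlinarith [Real.sq_sqrt hP.le]
        calc P^7 = (P^3 * Real.sqrt P)^2 := e2.symm
          _ ≤ (C * S^3)^2 := pow_le_pow_left₀ (by positivity) h2 2
          _ = C^2 * S^6 := e1)
  · intro h
    have h1 := (bridge_le hP hS hC).2 h.le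
    have h2 : (P/S)^3 ≤ C / Real.sqrt P := by
      have hsP : 0 < Real.sqrt P := Real.sqrt_pos.2 hP
      rw [div_pow, div_le_div_iff₀ (by positivity) hsP]
      have e2 : (P^3 * Real.sqrt P)^2 = P^7 := by nlinarith [Real.sq_sqrt hP.le]
      have e1 : (C * S^3)^2 = C^2 * S^6 := by ring
      have : (P^3 * Real.sqrt P)^2 ≤ (C * S^3)^2 := by rw [e1, e2]; exact h.ge
      exact (pow_le_pow_iff_left₀ (by positivity) (mul_nonneg hC (by positivity)) two_ne_zero).1 this
    exact le_antisymm h1 h2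

lemma bridge_ge {P S C : ℝ} (hP : 0 < P) (hS : 0 < S) (hC : 0 ≤ C) :
    ((P/S)^3 ≤ C / Real.sqrt P ↔ P^7 ≤ C^2 * S^6) := by
  have hsP : 0 < Real.sqrt P := Real.sqrt_pos.2 hP
  rw [div_pow, div_le_div_iff₀ (by positivity) hsP]
  have e1 : (C * S^3)^2 = C^2 * S^6 := by ring
  have e2 : (P^3 * Real.sqrt P)^2 = P^7 := by nlinarith [Real.sq_sqrt hP.le]
  rw [← e1, ← e2]
  exact (pow_le_pow_iff_left₀ (by positivity) (mul_nonneg hC (by positivity)) two_ne_zero).symm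

lemma sqrt7_sq : (343 * Real.sqrt 7 / 216)^2 = 823543/46656 := by
  rw [div_pow, mul_pow, Real.sq_sqrt (by norm_num : (0:ℝ) ≤ 7)]
  norm_num

lemma edge_lower {x y : ℕ} (hx : 1 ≤ x) (hy : 1 ≤ y) (hxy : 3 ≤ x + y) :
    343 * Real.sqrt 7 / 216 * (1 / Real.sqrt ((x:ℝ)*y)) ≤ (((x:ℝ)*y)/((x:ℝ)+y-2))^3 ∧
    (343 * Real.sqrt 7 / 216 * (1 / Real.sqrt ((x:ℝ)*y)) = (((x:ℝ)*y)/((x:ℝ)+y-2))^3 ↔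
      ((x = 1 ∧ y = 7) ∨ (x = 7 ∧ y = 1))) := by
  have hx' : (1:ℝ) ≤ x := by exact_mod_cast hx
  have hy' : (1:ℝ) ≤ y := by exact_mod_cast hy
  have hP : (0:ℝ) < (x:ℝ)*y := by nlinarith
  have hS : (0:ℝ) < (x:ℝ)+y-2 := by
    have : (3:ℝ) ≤ (x:ℝ)+y := by exact_mod_cast hxy
    linarith
  have hC : (0:ℝ) ≤ 343 * Real.sqrt 7 / 216 := by positivity
  rw [mul_one_div]
  constructor
  · rw [bridge_le hP hS hC, sqrt7_sq]
    have := lower_nat hx hy hxy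
    linarith
  · rw [bridge_eq hP hS hC, sqrt7_sq]
    constructor
    · intro h
      exact lower_nat_eq hx hy hxy (by linarith)
    · rintro (⟨rfl, rfl⟩ | ⟨rfl, rfl⟩) <;> norm_num

lemma edge_upper {x y n : ℕ} (hn3 : 3 ≤ n) (hx : 1 ≤ x) (hy : 1 ≤ y) (hxy : 3 ≤ x + y)
    (hxm : x ≤ n - 1) (hym : y ≤ n - 1) :
    (((x:ℝ)*y)/((x:ℝ)+y-2))^3 ≤ ((n:ℝ)-1)^7/(8*((n:ℝ)-2)^3) * (1 / Real.sqrt ((x:ℝ)*y)) ∧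
    ((((x:ℝ)*y)/((x:ℝ)+y-2))^3 = ((n:ℝ)-1)^7/(8*((n:ℝ)-2)^3) * (1 / Real.sqrt ((x:ℝ)*y)) ↔
      (x = n - 1 ∧ y = n - 1)) := by
  have hx' : (1:ℝ) ≤ x := by exact_mod_cast hx
  have hy' : (1:ℝ) ≤ y := by exact_mod_cast hy
  have hn' : (3:ℝ) ≤ n := by exact_mod_cast hn3
  have hP : (0:ℝ) < (x:ℝ)*y := by nlinarith
  have hS : (0:ℝ) < (x:ℝ)+y-2 := by
    have : (3:ℝ) ≤ (x:ℝ)+y := by exact_mod_cast hxy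
    linarith
  have hC : (0:ℝ) ≤ ((n:ℝ)-1)^7/(8*((n:ℝ)-2)^3) := by
    have h1 : (0:ℝ) < (n:ℝ)-2 := by linarith
    have h2 : (0:ℝ) < (n:ℝ)-1 := by linarith
    positivity
  have hm : (↑(n-1) : ℝ) = (n:ℝ)-1 := by
    have : 1 ≤ n := by omega
    push_cast [this]; ring
  have hnat := upper_nat hx hxm hy hym hxy
  rw [hm] at hnat
  have hC2 : (((n:ℝ)-1)^7/(8*((n:ℝ)-2)^3))^2 * ((x:ℝ)+y-2)^6
      = (((n:ℝ)-1)^14 * ((x:ℝ)+y-2)^6) / (64*((n:ℝ)-2)^6) := by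
    field_simp; ring
  have hd : (0:ℝ) < 64*((n:ℝ)-2)^6 := by
    have h1 : (0:ℝ) < (n:ℝ)-2 := by linarith
    positivity
  have e3 : ((x:ℝ)*y)^7 * (2*((n:ℝ)-1)-2)^6 = ((x:ℝ)*y)^7 * (64*((n:ℝ)-2)^6) := by ring
  have key : (((x:ℝ)*y)^7 ≤ (((n:ℝ)-1)^7/(8*((n:ℝ)-2)^3))^2 * ((x:ℝ)+y-2)^6 ↔
      ((x:ℝ)*y)^7 * (2*((n:ℝ)-1)-2)^6 ≤ ((n:ℝ)-1)^14 * ((x:ℝ)+y-2)^6) := by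
    rw [hC2, le_div_iff₀ hd, e3]
  have keyeq : (((x:ℝ)*y)^7 = (((n:ℝ)-1)^7/(8*((n:ℝ)-2)^3))^2 * ((x:ℝ)+y-2)^6 ↔
      ((x:ℝ)*y)^7 * (2*((n:ℝ)-1)-2)^6 = ((n:ℝ)-1)^14 * ((x:ℝ)+y-2)^6) := by
    rw [hC2, eq_div_iff hd.ne', e3]
  rw [mul_one_div]
  constructor
  · rw [bridge_ge hP hS hC, key]
    exact hnat.1
  · rw [eq_comm, bridge_eq hP hS hC]
    constructor
    · intro h
      exact hnat.2.1 (keyeq.1 h.symm)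
    · intro h
      exact (keyeq.2 (hnat.2.2 h)).symm

end AuxReal
section AuxGraph

variable {V : Type*} [Fintype V] [DecidableEq V] {G : SimpleGraph V} [DecidableRel G.Adj]

lemma reach_closed {S : Set V} (hS : ∀ a b, a ∈ S → G.Adj a b → b ∈ S)
    {u v : V} (h : G.Reachable u v) (hu : u ∈ S) : v ∈ S := by
  obtain ⟨p⟩ := h
  induction p with
  | nil => exact hu
  | cons h' p ih => exact ih (hS _ _ hu h')

lemma degree_pos_of_connected (hG : G.Connected) (h2 : 2 ≤ Fintype.card V) (v : V) :
    0 < G.degree v := by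
  rw [G.degree_pos_iff_exists_adj]
  by_contra hno
  push_neg at hno
  obtain ⟨w, hw⟩ := Fintype.exists_ne_of_one_lt_card (by omega) v
  have : w ∈ ({v} : Set V) := by
    refine reach_closed (S := {v}) ?_ (hG v w) rfl
    intro a b ha hab
    rw [Set.mem_singleton_iff] at ha
    subst ha
    exact absurd hab (hno b)
  exact hw (Set.mem_singleton_iff.1 this)

lemma unique_nbr {a b c : V} (hdeg : G.degree a = 1) (h1 : G.Adj a b) (h2 : G.Adj a c) :
    b = c := by
  have hb : b ∈ G.neighborFinset a := (G.mem_neighborFinset a b).2 h1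
  have hc : c ∈ G.neighborFinset a := (G.mem_neighborFinset a c).2 h2
  obtain ⟨x, hx⟩ := Finset.card_eq_one.1 hdeg
  rw [hx, Finset.mem_singleton] at hb hc
  rw [hb, hc]

lemma deg_sum_three (hG : G.Connected) (h3 : 3 ≤ Fintype.card V) {u v : V} (h : G.Adj u v) :
    3 ≤ G.degree u + G.degree v := by
  have hu : 0 < G.degree u := (G.degree_pos_iff_exists_adj u).2 ⟨v, h⟩
  have hv : 0 < G.degree v := (G.degree_pos_iff_exists_adj v).2 ⟨u, h.symm⟩
  by_contra hlt
  have hdu : G.degree u = 1 := by omega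
  have hdv : G.degree v = 1 := by omega
  have hclosed : ∀ a b, a ∈ ({u, v} : Set V) → G.Adj a b → b ∈ ({u, v} : Set V) := by
    intro a b ha hab
    rcases ha with rfl | ha
    · right; exact (unique_nbr hdu hab h).symm ▸ rfl
    · rw [Set.mem_singleton_iff] at ha; subst ha
      left; exact (unique_nbr hdv hab h.symm)
  have hall : ∀ w, w ∈ ({u, v} : Set V) :=
    fun w => reach_closed hclosed (hG u w) (Set.mem_insert u {v})
  have hsub : (Finset.univ : Finset V) ⊆ {u, v} := by
    intro w _
    rcases hall w with rfl | hw
    · simp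
    · rw [Set.mem_singleton_iff] at hw; subst hw; simp
  have := Finset.card_le_card hsub
  have h2 : ({u, v} : Finset V).card ≤ 2 := Finset.card_insert_le _ _ |>.trans (by simp)
  rw [Finset.card_univ] at this
  omega

lemma exists_edge (hG : G.Connected) (h2 : 2 ≤ Fintype.card V) :
    ∃ u v : V, G.Adj u v := by
  have : Nonempty V := Fintype.card_pos_iff.1 (by omega)
  obtain ⟨v⟩ := this
  obtain ⟨w, hw⟩ := (G.degree_pos_iff_exists_adj v).1 (degree_pos_of_connected hG h2 v)
  exact ⟨v, w, hw⟩

lemma star_char (hG : G.Connected) (h3 : 3 ≤ Fintype.card V)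
    (hdeg : ∀ u v, G.Adj u v → (G.degree u = 1 ∧ G.degree v = 7) ∨
      (G.degree u = 7 ∧ G.degree v = 1)) :
    ∃ c : V, (∀ a b, G.Adj a b ↔ (a = c ∧ b ≠ c) ∨ (a ≠ c ∧ b = c)) ∧
      Fintype.card V = 8 := by
  obtain ⟨u0, v0, h0⟩ := exists_edge hG (by omega)
  have hc : ∃ c : V, G.degree c = 7 := by
    rcases hdeg u0 v0 h0 with ⟨_, h⟩ | ⟨h, _⟩
    exacts [⟨v0, h⟩, ⟨u0, h⟩]
  obtain ⟨c, hc7⟩ := hc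
  have claim1 : ∀ a, G.Adj c a → G.degree a = 1 := by
    intro a ha
    rcases hdeg c a ha with ⟨h1, _⟩ | ⟨_, h1⟩
    · rw [hc7] at h1; omega
    · exact h1
  have hclosed : ∀ a b, a ∈ ({x | x = c ∨ G.Adj c x} : Set V) → G.Adj a b →
      b ∈ ({x | x = c ∨ G.Adj c x} : Set V) := by
    intro a b ha hab
    rcases ha with rfl | ha
    · right; exact hab
    · left; exact unique_nbr (claim1 a ha) hab ha.symm
  have hall : ∀ w, w = c ∨ G.Adj c w :=
    fun w => reach_closed hclosed (hG c w) (Or.inl rfl)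
  have char : ∀ a b, G.Adj a b ↔ (a = c ∧ b ≠ c) ∨ (a ≠ c ∧ b = c) := by
    intro a b
    constructor
    · intro hab
      by_cases hac : a = c
      · subst hac; exact Or.inl ⟨rfl, hab.ne'⟩
      · rcases hall a with rfl | ha
        · exact absurd rfl hac
        · exact Or.inr ⟨hac, unique_nbr (claim1 a ha) hab ha.symm⟩
    · rintro (⟨rfl, hb⟩ | ⟨ha, rfl⟩)
      · rcases hall b with rfl | h
        · exact absurd rfl hb
        · exact h
      · rcases hall a with rfl | h
        · exact absurd rfl ha
        · exact h.symm
  refine ⟨c, char, ?_⟩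
  have huniv : (Finset.univ : Finset V) = insert c (G.neighborFinset c) := by
    ext w
    simp only [Finset.mem_univ, true_iff, Finset.mem_insert, SimpleGraph.mem_neighborFinset]
    rcases hall w with rfl | h
    · exact Or.inl rfl
    · exact Or.inr h
  have hnotmem : c ∉ G.neighborFinset c := by simp
  have hcV : Fintype.card V = (insert c (G.neighborFinset c)).card := by
    rw [← huniv, Finset.card_univ]
  rw [hcV, Finset.card_insert_of_notMem hnotmem]
  have : (G.neighborFinset c).card = 7 := hc7
  omega

lemma star_degrees {c : V} (hchar : ∀ a b, G.Adj a b ↔ (a = c ∧ b ≠ c) ∨ (a ≠ c ∧ b = c))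
    (hcard : Fintype.card V = 8) :
    G.degree c = 7 ∧ ∀ a, a ≠ c → G.degree a = 1 := by
  constructor
  · have : G.neighborFinset c = Finset.univ.erase c := by
      ext w
      simp only [SimpleGraph.mem_neighborFinset, Finset.mem_erase, Finset.mem_univ, and_true]
      rw [hchar]
      constructor
      · rintro (⟨_, h⟩ | ⟨h, rfl⟩)
        · exact h
        · exact absurd rfl h
      · intro h; exact Or.inl ⟨rfl, h⟩
    rw [SimpleGraph.degree, this, Finset.card_erase_of_mem (Finset.mem_univ c),
      Finset.card_univ, hcard]
  · intro a ha
    have : G.neighborFinset a = {c} := by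
      ext w
      simp only [SimpleGraph.mem_neighborFinset, Finset.mem_singleton]
      rw [hchar]
      constructor
      · rintro (⟨rfl, _⟩ | ⟨_, rfl⟩)
        · exact absurd rfl ha
        · rfl
      · rintro rfl; exact Or.inr ⟨ha, rfl⟩
    rw [SimpleGraph.degree, this, Finset.card_singleton]

lemma star_iso {c : V} (hchar : ∀ a b, G.Adj a b ↔ (a = c ∧ b ≠ c) ∨ (a ≠ c ∧ b = c))
    (hcard : Fintype.card V = 8) :
    Nonempty (G ≃g completeBipartiteGraph (Fin 1) (Fin 7)) := by
  have hc1 : Fintype.card {a : V // a = c} = 1 := Fintype.card_subtype_eq c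
  have hc7 : Fintype.card {a : V // ¬(a = c)} = 7 := by
    have := Fintype.card_subtype_compl (fun a => a = c) (α := V)
    rw [this, hc1, hcard]
  let e1 : {a : V // a = c} ≃ Fin 1 := Fintype.equivFinOfCardEq hc1
  let e2 : {a : V // ¬(a = c)} ≃ Fin 7 := Fintype.equivFinOfCardEq hc7
  let e : V ≃ Fin 1 ⊕ Fin 7 := (Equiv.sumCompl (· = c)).symm.trans (Equiv.sumCongr e1 e2)
  refine ⟨⟨e, ?_⟩⟩
  intro a b
  show (completeBipartiteGraph (Fin 1) (Fin 7)).Adj (e a) (e b) ↔ G.Adj a b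
  rw [hchar a b]
  by_cases hac : a = c <;> by_cases hbc : b = c
  · have ea : e a = Sum.inl (e1 ⟨a, hac⟩) := by
      simp only [e, Equiv.trans_apply, Equiv.sumCongr_apply]
      rw [Equiv.sumCompl_symm_apply_of_pos (p := fun x => x = c) hac]
      rfl
    have eb : e b = Sum.inl (e1 ⟨b, hbc⟩) := by
      simp only [e, Equiv.trans_apply, Equiv.sumCongr_apply]
      rw [Equiv.sumCompl_symm_apply_of_pos (p := fun x => x = c) hbc]
      rfl
    rw [ea, eb]; simp [hac, hbc]
  · have ea : e a = Sum.inl (e1 ⟨a, hac⟩) := by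
      simp only [e, Equiv.trans_apply, Equiv.sumCongr_apply]
      rw [Equiv.sumCompl_symm_apply_of_pos (p := fun x => x = c) hac]
      rfl
    have eb : e b = Sum.inr (e2 ⟨b, hbc⟩) := by
      simp only [e, Equiv.trans_apply, Equiv.sumCongr_apply]
      rw [Equiv.sumCompl_symm_apply_of_neg (p := fun x => x = c) hbc]
      rfl
    rw [ea, eb]; simp [hac, hbc]
  · have ea : e a = Sum.inr (e2 ⟨a, hac⟩) := by
      simp only [e, Equiv.trans_apply, Equiv.sumCongr_apply]
      rw [Equiv.sumCompl_symm_apply_of_neg (p := fun x => x = c) hac]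
      rfl
    have eb : e b = Sum.inl (e1 ⟨b, hbc⟩) := by
      simp only [e, Equiv.trans_apply, Equiv.sumCongr_apply]
      rw [Equiv.sumCompl_symm_apply_of_pos (p := fun x => x = c) hbc]
      rfl
    rw [ea, eb]; simp [hac, hbc]
  · have ea : e a = Sum.inr (e2 ⟨a, hac⟩) := by
      simp only [e, Equiv.trans_apply, Equiv.sumCongr_apply]
      rw [Equiv.sumCompl_symm_apply_of_neg (p := fun x => x = c) hac]
      rfl
    have eb : e b = Sum.inr (e2 ⟨b, hbc⟩) := by
      simp only [e, Equiv.trans_apply, Equiv.sumCongr_apply]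
      rw [Equiv.sumCompl_symm_apply_of_neg (p := fun x => x = c) hbc]
      rfl
    rw [ea, eb]; simp [hac, hbc]

lemma star_of_iso (φ : G ≃g completeBipartiteGraph (Fin 1) (Fin 7)) :
    ∃ c : V, (∀ a b, G.Adj a b ↔ (a = c ∧ b ≠ c) ∨ (a ≠ c ∧ b = c)) ∧
      Fintype.card V = 8 := by
  refine ⟨φ.symm (Sum.inl 0), fun a b => ?_, ?_⟩
  · have key : ∀ x : V, x = φ.symm (Sum.inl 0) ↔ (φ x).isLeft := by
      intro x
      constructor
      · rintro rfl; simp [RelIso.apply_symm_apply]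
      · intro h
        obtain ⟨i, hi⟩ := Sum.isLeft_iff.1 h
        have : i = 0 := Subsingleton.elim _ _
        subst this
        have := congrArg φ.symm hi
        simpa using this
    rw [← φ.map_rel_iff]
    show (completeBipartiteGraph (Fin 1) (Fin 7)).Adj (φ a) (φ b) ↔ _
    simp only [completeBipartiteGraph_adj]
    have hra : (φ a).isRight = !(φ a).isLeft := by cases h : φ a <;> simp
    have hrb : (φ b).isRight = !(φ b).isLeft := by cases h : φ b <;> simp
    rw [hra, hrb]
    have ka := key a
    have kb := key b
    constructor
    · rintro (⟨h1, h2⟩ | ⟨h1, h2⟩)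
      · exact Or.inl ⟨ka.2 h1, fun hh => by rw [kb.1 hh] at h2; simp at h2⟩
      · exact Or.inr ⟨fun hh => by rw [ka.1 hh] at h1; simp at h1, kb.2 h2⟩
    · rintro (⟨h1, h2⟩ | ⟨h1, h2⟩)
      · refine Or.inl ⟨(ka.1 h1 : _), ?_⟩
        have : ¬ (φ b).isLeft = true := fun hh => h2 (kb.2 hh)
        simp only [Bool.not_eq_true] at this
        simp [this]
      · refine Or.inr ⟨?_, (kb.1 h2 : _)⟩
        have : ¬ (φ a).isLeft = true := fun hh => h1 (ka.2 hh)
        simp only [Bool.not_eq_true] at this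
        simp [this]
  · rw [Fintype.card_congr φ.toEquiv]
    simp

lemma complete_iso {n : ℕ} (hchar : ∀ a b, G.Adj a b ↔ a ≠ b) (hcard : Fintype.card V = n) :
    Nonempty (G ≃g completeGraph (Fin n)) := by
  let e : V ≃ Fin n := Fintype.equivFinOfCardEq hcard
  refine ⟨⟨e, ?_⟩⟩
  intro a b
  show (completeGraph (Fin n)).Adj (e a) (e b) ↔ G.Adj a b
  rw [hchar a b]
  simp [completeGraph, e.injective.ne_iff]

lemma complete_of_iso {n : ℕ} (φ : G ≃g completeGraph (Fin n)) :
    ∀ a b, G.Adj a b ↔ a ≠ b := by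
  intro a b
  rw [← φ.map_rel_iff]
  show (completeGraph (Fin n)).Adj (φ a) (φ b) ↔ _
  simp [completeGraph, φ.toEquiv.injective.ne_iff]

lemma complete_degrees {n : ℕ} (hchar : ∀ a b, G.Adj a b ↔ a ≠ b)
    (hcard : Fintype.card V = n) (v : V) : G.degree v = n - 1 := by
  have : G.neighborFinset v = Finset.univ.erase v := by
    ext w
    simp only [SimpleGraph.mem_neighborFinset, Finset.mem_erase, Finset.mem_univ, and_true]
    rw [hchar]
    exact ne_comm
  rw [SimpleGraph.degree, this, Finset.card_erase_of_mem (Finset.mem_univ v),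
    Finset.card_univ, hcard]

lemma complete_char {n : ℕ} (hG : G.Connected) (hn : Fintype.card V = n) (hn3 : 3 ≤ n)
    (hdeg : ∀ u v, G.Adj u v → G.degree u = n - 1 ∧ G.degree v = n - 1) :
    ∀ a b, G.Adj a b ↔ a ≠ b := by
  have hall : ∀ v : V, G.degree v = n - 1 := by
    intro v
    obtain ⟨w, hw⟩ := (G.degree_pos_iff_exists_adj v).1
      (degree_pos_of_connected hG (by omega) v)
    exact (hdeg v w hw).1
  intro a b
  constructor
  · exact fun h => h.ne
  · intro hab
    have hnb : G.neighborFinset a = Finset.univ.erase a := by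
      apply Finset.eq_of_subset_of_card_le
      · intro w hw
        rw [SimpleGraph.mem_neighborFinset] at hw
        exact Finset.mem_erase.2 ⟨hw.ne', Finset.mem_univ w⟩
      · rw [Finset.card_erase_of_mem (Finset.mem_univ a), Finset.card_univ, hn]
        exact le_of_eq (hall a).symm
    have : b ∈ G.neighborFinset a := by
      rw [hnb]
      exact Finset.mem_erase.2 ⟨Ne.symm hab, Finset.mem_univ b⟩
    rwa [SimpleGraph.mem_neighborFinset] at this

lemma sum_lift_le {f g : Sym2 V → ℝ}
    (h : ∀ u v, G.Adj u v → f s(u, v) ≤ g s(u, v)) :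
    ∑ e ∈ G.edgeFinset, f e ≤ ∑ e ∈ G.edgeFinset, g e := by
  apply Finset.sum_le_sum
  intro e he
  induction e using Sym2.ind with
  | _ u v =>
    exact h u v (by rwa [SimpleGraph.mem_edgeFinset, SimpleGraph.mem_edgeSet] at he)

lemma sum_lift_eq_iff {f g : Sym2 V → ℝ} {P : V → V → Prop}
    (hfg : ∀ u v, G.Adj u v → (f s(u, v) ≤ g s(u, v) ∧ (f s(u, v) = g s(u, v) ↔ P u v))) :
    ((∑ e ∈ G.edgeFinset, f e) = ∑ e ∈ G.edgeFinset, g e ↔ ∀ u v, G.Adj u v → P u v) := by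
  have hle : ∀ e ∈ G.edgeFinset, f e ≤ g e := by
    intro e he
    induction e using Sym2.ind with
    | _ u v =>
      exact (hfg u v (by rwa [SimpleGraph.mem_edgeFinset, SimpleGraph.mem_edgeSet] at he)).1
  constructor
  · intro hsum u v huv
    have hall : ∀ e ∈ G.edgeFinset, f e = g e := by
      by_contra hc
      push_neg at hc
      obtain ⟨e, he, hne⟩ := hc
      have := Finset.sum_lt_sum hle ⟨e, he, lt_of_le_of_ne (hle e he) hne⟩
      linarith
    have := hall s(u, v)
      (by rw [SimpleGraph.mem_edgeFinset, SimpleGraph.mem_edgeSet]; exact huv)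
    exact (hfg u v huv).2.1 this
  · intro hP
    apply Finset.sum_congr rfl
    intro e he
    induction e using Sym2.ind with
    | _ u v =>
      have huv : G.Adj u v := by
        rwa [SimpleGraph.mem_edgeFinset, SimpleGraph.mem_edgeSet] at he
      exact (hfg u v huv).2.2 (hP u v huv)

end AuxGraph


variable {V : Type*} [Fintype V] [DecidableEq V]

variable (G : SimpleGraph V) [DecidableRel G.Adj]

theorem stmt17 (hG : G.Connected) (n : ℕ) (hn : Fintype.card V = n) (hn3 : 3 ≤ n) :
    343 * Real.sqrt 7 / 216 * randicIndex G ≤ augZagrebIndex G ∧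
    augZagrebIndex G ≤ ((n : ℝ) - 1) ^ 7 / (8 * ((n : ℝ) - 2) ^ 3) * randicIndex G ∧
    (343 * Real.sqrt 7 / 216 * randicIndex G = augZagrebIndex G ↔
      Nonempty (G ≃g completeBipartiteGraph (Fin 1) (Fin 7))) ∧
    (augZagrebIndex G = ((n : ℝ) - 1) ^ 7 / (8 * ((n : ℝ) - 2) ^ 3) * randicIndex G ↔
      Nonempty (G ≃g completeGraph (Fin n))) := by
  have hcard3 : 3 ≤ Fintype.card V := by omega
  have hdegpos : ∀ v : V, 1 ≤ G.degree v :=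
    fun v => degree_pos_of_connected hG (by omega) v
  have hdeglt : ∀ v : V, G.degree v ≤ n - 1 := by
    intro v
    have := G.degree_lt_card_verts v
    omega
  have hfl : ∀ u v : V, G.Adj u v →
      (343 * Real.sqrt 7 / 216 * (1 / Real.sqrt ((G.degree u : ℝ) * (G.degree v : ℝ)))
        ≤ (((G.degree u : ℝ) * (G.degree v : ℝ)) /
          ((G.degree u : ℝ) + (G.degree v : ℝ) - 2)) ^ 3
      ∧ (343 * Real.sqrt 7 / 216 * (1 / Real.sqrt ((G.degree u : ℝ) * (G.degree v : ℝ)))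
        = (((G.degree u : ℝ) * (G.degree v : ℝ)) /
          ((G.degree u : ℝ) + (G.degree v : ℝ) - 2)) ^ 3 ↔
        (G.degree u = 1 ∧ G.degree v = 7) ∨ (G.degree u = 7 ∧ G.degree v = 1))) :=
    fun u v h => edge_lower (hdegpos u) (hdegpos v) (deg_sum_three hG hcard3 h)
  have hfu : ∀ u v : V, G.Adj u v →
      ((((G.degree u : ℝ) * (G.degree v : ℝ)) /
          ((G.degree u : ℝ) + (G.degree v : ℝ) - 2)) ^ 3
        ≤ ((n : ℝ) - 1) ^ 7 / (8 * ((n : ℝ) - 2) ^ 3) *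
          (1 / Real.sqrt ((G.degree u : ℝ) * (G.degree v : ℝ)))
      ∧ ((((G.degree u : ℝ) * (G.degree v : ℝ)) /
          ((G.degree u : ℝ) + (G.degree v : ℝ) - 2)) ^ 3
        = ((n : ℝ) - 1) ^ 7 / (8 * ((n : ℝ) - 2) ^ 3) *
          (1 / Real.sqrt ((G.degree u : ℝ) * (G.degree v : ℝ))) ↔
        (G.degree u = n - 1 ∧ G.degree v = n - 1))) :=
    fun u v h => edge_upper hn3 (hdegpos u) (hdegpos v) (deg_sum_three hG hcard3 h)
      (hdeglt u) (hdeglt v)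
  unfold randicIndex augZagrebIndex
  rw [Finset.mul_sum, Finset.mul_sum]
  refine ⟨?_, ?_, ?_, ?_⟩
  · exact sum_lift_le (fun u v h => (hfl u v h).1)
  · exact sum_lift_le (fun u v h => (hfu u v h).1)
  · rw [sum_lift_eq_iff hfl]
    constructor
    · intro hdeg
      obtain ⟨c, char, hcard8⟩ := star_char hG hcard3 hdeg
      exact star_iso char hcard8
    · rintro ⟨φ⟩
      obtain ⟨c, char, hcard8⟩ := star_of_iso φ
      obtain ⟨hc7, h1⟩ := star_degrees char hcard8
      intro u v huv
      rcases (char u v).1 huv with ⟨rfl, hb⟩ | ⟨ha, rfl⟩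
      · exact Or.inr ⟨hc7, h1 v hb⟩
      · exact Or.inl ⟨h1 u ha, hc7⟩
  · rw [sum_lift_eq_iff hfu]
    constructor
    · intro hdeg
      exact complete_iso (complete_char hG hn hn3 hdeg) hn
    · rintro ⟨φ⟩
      have char := complete_of_iso φ
      have hdall := complete_degrees char hn
      exact fun u v huv => ⟨hdall u, hdall v⟩
end
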